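/- For the four-job instance with parameter p, the vector y defined by y(3p−1, ∅) = 1 and y(t,A) = 0 for all other pairs (t,A) is a feasible solution to the dual (D), and its value equals ∑_{t∈𝒯} ∑_{A⊆𝒥} D(t,A) y(t,A) = D(3p−1, ∅) = p + 2. -/

import Mathlib

open Finset ENNReal

/-- The cost functions of the four-job tight instance with parameter `p`:
jobs `0,1` cost `0` on `[1, p−1]`, `p` on `[p, 3p−1]`, and `∞` afterwards;
jobs `2,3` cost `0` on `[1, 3p−2]` and `p` afterwards. -/
noncomputable def f8 (p : ℕ) (j : Fin 4) (t : ℕ) : ℝ≥0∞ :=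
  if (j : ℕ) < 2 then
    if t ≤ p - 1 then 0 else if t ≤ 3 * p - 1 then (p : ℝ≥0∞) else ⊤
  else
    if t ≤ 3 * p - 2 then 0 else (p : ℝ≥0∞)

/-- Auxiliary: a double sum against the point-mass at `(t0, ∅)` collapses. -/
lemma aux_sum (s t0 : ℕ) (S : Finset (Finset (Fin 4))) (hS : ∅ ∈ S)
    (c : ℕ → Finset (Fin 4) → ℝ≥0∞) :
    ∑ t ∈ Icc 1 s, ∑ A ∈ S,
        c t A * (if t = t0 ∧ A = ∅ then (1:ℝ≥0∞) else 0)
      = if t0 ∈ Icc 1 s then c t0 ∅ else 0 := by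
  have h1 : ∀ t, (∑ A ∈ S, c t A * if t = t0 ∧ A = ∅ then (1:ℝ≥0∞) else 0)
      = if t = t0 then c t ∅ else 0 := by
    intro t
    by_cases ht : t = t0
    · simp only [ht, true_and, mul_ite, mul_one, mul_zero, if_true]
      rw [Finset.sum_ite_eq' S ∅ (c t0), if_pos hS]
    · simp [ht]
  simp only [h1]
  rw [Finset.sum_ite_eq' (Icc 1 s) t0 (fun t => c t ∅)]

/-- For the four-job instance with parameter `p ≥ 4` (four jobs of
processing time `p`, `T = 4p`, demand `D(t,A) = max{T − t + 1 − ∑_{i∈A} p, 0}` and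
`p_j(t,A) = min{p, D(t,A)}`), the vector `y` with `y(3p−1, ∅) = 1` and `y(t,A) = 0`
otherwise is feasible for the dual (D), and its value
`∑_{t∈𝒯} ∑_{A⊆𝒥} D(t,A) y(t,A) = D(3p−1, ∅)` equals `p + 2`. -/
theorem stmt_9 (p : ℕ) (hp : 4 ≤ p)
    (y : ℕ → Finset (Fin 4) → ℝ≥0∞)
    (hy : y = fun t A => if t = 3 * p - 1 ∧ A = ∅ then 1 else 0) :
    (∀ j : Fin 4, ∀ s ∈ Icc 1 (4 * p),
      ∑ t ∈ Icc 1 s, ∑ A ∈ univ.filter (fun A : Finset (Fin 4) => j ∉ A),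
        ((min p (4 * p + 1 - t - ∑ _i ∈ A, p) : ℕ) : ℝ≥0∞) * y t A ≤ f8 p j s) ∧
    ∑ t ∈ Icc 1 (4 * p), ∑ A : Finset (Fin 4),
      ((4 * p + 1 - t - ∑ _i ∈ A, p : ℕ) : ℝ≥0∞) * y t A = (p : ℝ≥0∞) + 2 := by
  subst hy
  constructor
  · intro j s hs
    rw [mem_Icc] at hs
    rw [aux_sum s (3*p-1) _ (by simp)]
    split_ifs with h
    · rw [mem_Icc] at h
      have hmin : min p (4*p+1-(3*p-1) - ∑ _i ∈ (∅:Finset (Fin 4)), p) = p := by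
        rw [Finset.sum_empty]; omega
      rw [hmin]
      unfold f8
      by_cases hj : (j:ℕ) < 2
      · rw [if_pos hj, if_neg (by omega)]
        split_ifs
        · exact le_refl _
        · exact le_top
      · rw [if_neg hj, if_neg (by omega)]
    · exact zero_le
  · rw [aux_sum (4*p) (3*p-1) univ (mem_univ _)]
    rw [if_pos (by rw [mem_Icc]; omega)]
    have : 4*p+1-(3*p-1) - ∑ _i ∈ (∅:Finset (Fin 4)), p = p + 2 := by
      rw [Finset.sum_empty]; omega
    rw [this]
    push_cast
    ring
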